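/- arXiv:1611.07175 — 3 statements merged into one kernel-verified Lean document; each statement's English description precedes it below -/
import Mathlib

section
/- Let F0, F1, ..., FN be sigma-algebras such that F1,...,FN are conditionally independent given F0, and let Gn ⊆ Fn for each n = 1,...,N. Then for any events An ∈ Fn, n = 1,...,N, the conditional probability of the intersection of A1,...,AN given the sigma-algebra generated by F0, G1,...,GN equals the product of the conditional probabilities of each An given that same sigma-algebra, almost surely. -/
open MeasureTheory MeasurableSpace Set
set_option maxHeartbeats 1000000

namespace Stmt4Aux

variable {Ω : Type*} {mΩ : MeasurableSpace Ω} (μ : Measure Ω) [IsProbabilityMeasure μ]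

noncomputable def ind (S : Set Ω) : Ω → ℝ := S.indicator fun _ => 1

lemma ind_apply_mul (S T : Set Ω) (ω : Ω) : ind S ω * ind T ω = ind (S ∩ T) ω := by
  by_cases hS : ω ∈ S <;> by_cases hT : ω ∈ T <;>
    simp [ind, Set.indicator_apply, hS, hT, Set.mem_inter_iff]

lemma ind_sm {S : Set Ω} (hS : MeasurableSet S) : StronglyMeasurable (ind S) :=
  stronglyMeasurable_const.indicator hS

lemma ind_integrable {S : Set Ω} (hS : MeasurableSet S) : Integrable (ind S) μ :=
  (integrable_const (1:ℝ)).indicator hS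

lemma ind_norm_le (S : Set Ω) (ω : Ω) : ‖ind S ω‖ ≤ 1 := by
  by_cases h : ω ∈ S <;> simp [ind, Set.indicator_apply, h]

lemma setIntegral_ind {S : Set Ω} (hS : MeasurableSet S) (t : Set Ω) :
    ∫ ω in t, ind S ω ∂μ = (μ (t ∩ S)).toReal := by
  rw [ind, setIntegral_indicator hS, setIntegral_const, smul_eq_mul, mul_one]
  rfl

lemma setIntegral_inter_ind (f : Ω → ℝ) {t : Set Ω} (ht : MeasurableSet[mΩ] t) (s : Set Ω) :
    ∫ ω in s ∩ t, f ω ∂μ = ∫ ω in s, t.indicator f ω ∂μ :=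
  (setIntegral_indicator ht).symm

lemma condexp_ind_norm_le {m : MeasurableSpace Ω} (hm : m ≤ mΩ) {S : Set Ω}
    (hS : MeasurableSet[mΩ] S) : ∀ᵐ ω ∂μ, ‖(μ[ind S | m]) ω‖ ≤ 1 := by
  have h0 : 0 ≤ᵐ[μ] μ[ind S | m] :=
    condExp_nonneg (Filter.Eventually.of_forall fun ω => Set.indicator_nonneg (by simp) ω)
  have h1 : μ[ind S | m] ≤ᵐ[μ] μ[(fun _ => (1:ℝ)) | m] := by
    refine condExp_mono (ind_integrable μ hS) (integrable_const _)
      (Filter.Eventually.of_forall fun ω => ?_)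
    by_cases h : ω ∈ S <;> simp [ind, Set.indicator_apply, h]
  have h2 := condExp_const hm (1:ℝ) (μ := μ)
  filter_upwards [h0, h1] with ω hω0 hω1
  simp only [Pi.zero_apply] at hω0
  have h2' := congrFun h2 ω
  rw [h2'] at hω1
  rw [Real.norm_eq_abs, abs_le]
  exact ⟨by linarith, by linarith⟩

/-- π-system of intersections generating `M ⊔ G`. -/
def piSys (M G : MeasurableSpace Ω) : Set (Set Ω) :=
  {u | ∃ B D : Set Ω, MeasurableSet[M] B ∧ MeasurableSet[G] D ∧ u = B ∩ D}

lemma isPiSystem_piSys (M G : MeasurableSpace Ω) : IsPiSystem (piSys M G) := by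
  rintro u ⟨B1, D1, hB1, hD1, rfl⟩ v ⟨B2, D2, hB2, hD2, rfl⟩ -
  exact ⟨B1 ∩ B2, D1 ∩ D2, hB1.inter hB2, hD1.inter hD2, by
    ext ω; simp [Set.mem_inter_iff]; tauto⟩

lemma sup_eq_generateFrom_piSys (M G : MeasurableSpace Ω) :
    M ⊔ G = MeasurableSpace.generateFrom (piSys M G) := by
  refine le_antisymm (sup_le ?_ ?_) (MeasurableSpace.generateFrom_le ?_)
  · intro s hs
    exact measurableSet_generateFrom ⟨s, Set.univ, hs, MeasurableSet.univ, (Set.inter_univ s).symm⟩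
  · intro s hs
    exact measurableSet_generateFrom ⟨Set.univ, s, MeasurableSet.univ, hs, (Set.univ_inter s).symm⟩
  · rintro u ⟨B, D, hB, hD, rfl⟩
    exact MeasurableSet.inter ((le_sup_left : M ≤ M ⊔ G) _ hB)
      ((le_sup_right : G ≤ M ⊔ G) _ hD)

/-- Dynkin-type extension of set-integral equality from a π-system. -/
lemma setIntegral_eq_of_generateFrom
    {S : Set (Set Ω)} (hm : MeasurableSpace.generateFrom S ≤ mΩ) (hPi : IsPiSystem S)
    {f g : Ω → ℝ} (hf : Integrable f μ) (hg : Integrable g μ)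
    (h_univ : ∫ ω, f ω ∂μ = ∫ ω, g ω ∂μ)
    (hS : ∀ s ∈ S, ∫ ω in s, f ω ∂μ = ∫ ω in s, g ω ∂μ) :
    ∀ t, MeasurableSet[MeasurableSpace.generateFrom S] t →
      ∫ ω in t, f ω ∂μ = ∫ ω in t, g ω ∂μ := by
  have := @MeasurableSpace.induction_on_inter Ω
    (MeasurableSpace.generateFrom S) (fun t _ => ∫ ω in t, f ω ∂μ = ∫ ω in t, g ω ∂μ) S
    rfl hPi
    (by simp) hS ?_ ?_
  · exact fun t ht => this t ht
  · intro t htm ht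
    have ht' : MeasurableSet[mΩ] t := hm _ htm
    have h1 := integral_add_compl ht' hf
    have h2 := integral_add_compl ht' hg
    rw [h_univ] at h1
    rw [← h2] at h1
    linarith
  · intro u hdisj hmeas hC
    have hmeas' : ∀ i, MeasurableSet[mΩ] (u i) := fun i => hm _ (hmeas i)
    rw [integral_iUnion hmeas' hdisj hf.integrableOn,
      integral_iUnion hmeas' hdisj hg.integrableOn]
    exact tsum_congr hC

end Stmt4Aux

namespace Stmt4Aux
section Two
variable {Ω : Type*} {M G m0 : MeasurableSpace Ω} {mΩ : MeasurableSpace Ω} (μ : Measure Ω) [IsProbabilityMeasure μ]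

lemma mul_norm_le_one {a b : ℝ} (ha : ‖a‖ ≤ 1) (hb : ‖b‖ ≤ 1) : ‖a * b‖ ≤ 1 := by
  rw [norm_mul]
  nlinarith [norm_nonneg a, norm_nonneg b]

/-- Conditional independence of a family of σ-algebras given `m0`,
expressed via conditional expectations of indicators. -/
def CondIndepFam {N : ℕ} (F : Fin N → MeasurableSpace Ω) (m0 : MeasurableSpace Ω) : Prop :=
  ∀ A : Fin N → Set Ω, (∀ n, MeasurableSet[F n] (A n)) →
    (μ[ind (⋂ n, A n) | m0]) =ᵐ[μ] fun ω => ∏ n, (μ[ind (A n) | m0]) ω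

lemma CondIndepFam.pair {N : ℕ} {F : Fin N → MeasurableSpace Ω}
    (hm0 : m0 ≤ mΩ)
    (hCI : CondIndepFam μ F m0) {i j : Fin N} (hij : i ≠ j) {S T : Set Ω}
    (hS : MeasurableSet[F i] S) (hT : MeasurableSet[F j] T) :
    (μ[ind (S ∩ T) | m0]) =ᵐ[μ] fun ω => (μ[ind S | m0]) ω * (μ[ind T | m0]) ω := by
  set A : Fin N → Set Ω := fun m => if m = i then S else if m = j then T else Set.univ with hA
  have hAm : ∀ m, MeasurableSet[F m] (A m) := by
    intro m
    by_cases h1 : m = i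
    · subst h1; simpa [hA] using hS
    · by_cases h2 : m = j
      · subst h2; simpa [hA, h1] using hT
      · simpa [hA, h1, h2] using (MeasurableSet.univ : MeasurableSet[F m] Set.univ)
  have hInter : ⋂ m, A m = S ∩ T := by
    ext ω
    simp only [Set.mem_iInter, Set.mem_inter_iff]
    constructor
    · intro h
      have h1 := h i
      have h2 := h j
      simp only [hA, if_pos rfl] at h1
      simp only [hA, if_neg (Ne.symm hij), if_pos rfl] at h2
      exact ⟨h1, h2⟩
    · rintro ⟨h1, h2⟩ m
      by_cases e1 : m = i
      · subst e1; simpa [hA]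
      · by_cases e2 : m = j
        · subst e2; simpa [hA, e1]
        · simp [hA, e1, e2]
  have hfac : ∀ m, m ≠ i → m ≠ j → (μ[ind (A m) | m0]) = fun _ => (1:ℝ) := by
    intro m h1 h2
    have hU : A m = Set.univ := by simp [hA, h1, h2]
    rw [hU]
    rw [show ind (Set.univ : Set Ω) = fun _ => (1:ℝ) from Set.indicator_univ _]
    exact condExp_const hm0 1
  have hi : A i = S := by simp [hA]
  have hj : A j = T := by simp [hA, Ne.symm hij]
  have hprod : (fun ω => ∏ m, (μ[ind (A m) | m0]) ω)
      = fun ω => (μ[ind S | m0]) ω * (μ[ind T | m0]) ω := by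
    funext ω
    have : ∏ m, (μ[ind (A m) | m0]) ω = ∏ m ∈ ({i, j} : Finset (Fin N)), (μ[ind (A m) | m0]) ω := by
      refine (Finset.prod_subset (Finset.subset_univ _) ?_).symm
      intro m _ hm
      simp only [Finset.mem_insert, Finset.mem_singleton, not_or] at hm
      rw [hfac m hm.1 hm.2]
    rw [this, Finset.prod_pair hij, hi, hj]
  have := hCI A hAm
  rw [hInter, hprod] at this
  exact this

/-- Doob-type lemma: if `T` is conditionally independent of `G` given `M`
(in the product-formula sense), then conditioning on `M ⊔ G` gives the same
conditional probability as conditioning on `M`. -/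
lemma condexp_eq_condexp_sup (hM : M ≤ mΩ) (hG : G ≤ mΩ)
    {T : Set Ω} (hT : MeasurableSet[mΩ] T)
    (h : ∀ D : Set Ω, MeasurableSet[G] D →
      (μ[ind (T ∩ D) | M]) =ᵐ[μ] fun ω => (μ[ind T | M]) ω * (μ[ind D | M]) ω) :
    (μ[ind T | M]) =ᵐ[μ] (μ[ind T | M ⊔ G]) := by
  have hMG : M ⊔ G ≤ mΩ := sup_le hM hG
  refine ae_eq_condExp_of_forall_setIntegral_eq hMG (ind_integrable μ hT)
    ?_ ?_ ?_
  · intro s _ _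
    exact integrable_condExp.integrableOn
  case refine_3 =>
    exact ((stronglyMeasurable_condExp (μ := μ) (m := M) (f := ind T)).mono
      (le_sup_left : M ≤ M ⊔ G)).aestronglyMeasurable
  intro s hs _
  have key : ∀ u ∈ piSys M G,
      ∫ ω in u, (μ[ind T | M]) ω ∂μ = ∫ ω in u, ind T ω ∂μ := by
    rintro u ⟨B, D, hB, hD, rfl⟩
    have hD' : MeasurableSet[mΩ] D := hG _ hD
    have hB' : MeasurableSet[mΩ] B := hM _ hB
    have e1 : ∫ ω in B ∩ D, (μ[ind T | M]) ω ∂μ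
        = ∫ ω in B, D.indicator (μ[ind T | M]) ω ∂μ :=
      setIntegral_inter_ind μ _ hD' B
    have e2 : D.indicator (μ[ind T | M]) = fun ω => (μ[ind T | M]) ω * ind D ω := by
      funext ω
      by_cases hω : ω ∈ D <;> simp [ind, Set.indicator_apply, hω]
    have hint : Integrable (fun ω => (μ[ind T | M]) ω * ind D ω) μ := by
      refine Integrable.mono' (integrable_const (1:ℝ))
        (((stronglyMeasurable_condExp.mono hM).mul (ind_sm hD')).aestronglyMeasurable) ?_
      filter_upwards [condexp_ind_norm_le μ hM hT] with ω hω
      exact mul_norm_le_one hω (ind_norm_le D ω)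
    have e3 : ∫ ω in B, (μ[ind T | M]) ω * ind D ω ∂μ
        = ∫ ω in B, (μ[fun ω' => (μ[ind T | M]) ω' * ind D ω' | M]) ω ∂μ :=
      (setIntegral_condExp hM hint hB).symm
    have e4 : (μ[fun ω' => (μ[ind T | M]) ω' * ind D ω' | M])
        =ᵐ[μ] fun ω => (μ[ind T | M]) ω * (μ[ind D | M]) ω := by
      have := condExp_mul_of_stronglyMeasurable_left (μ := μ) (m := M)
        (f := μ[ind T | M]) (g := ind D) stronglyMeasurable_condExp
        (by exact hint) (ind_integrable μ hD')
      exact this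
    have e5 : (fun ω => (μ[ind T | M]) ω * (μ[ind D | M]) ω)
        =ᵐ[μ] (μ[ind (T ∩ D) | M]) := (h D hD).symm
    have e6 : ∫ ω in B, (μ[ind (T ∩ D) | M]) ω ∂μ = ∫ ω in B, ind (T ∩ D) ω ∂μ :=
      setIntegral_condExp hM (ind_integrable μ (hT.inter hD')) hB
    have e45 : ∫ ω in B, (μ[fun ω' => (μ[ind T | M]) ω' * ind D ω' | M]) ω ∂μ
        = ∫ ω in B, (μ[ind (T ∩ D) | M]) ω ∂μ :=
      integral_congr_ae (ae_restrict_of_ae (e4.trans e5))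
    rw [e1, show (∫ ω in B, D.indicator (μ[ind T | M]) ω ∂μ)
        = ∫ ω in B, (μ[ind T | M]) ω * ind D ω ∂μ by rw [← e2],
      e3, e45, e6, setIntegral_ind μ (hT.inter hD'), setIntegral_ind μ hT]
    congr 2
    ext ω; simp only [Set.mem_inter_iff]; tauto
  have hgen : MeasurableSpace.generateFrom (piSys M G) ≤ mΩ := by
    rw [← sup_eq_generateFrom_piSys]; exact hMG
  have huniv : ∫ ω, (μ[ind T | M]) ω ∂μ = ∫ ω, ind T ω ∂μ :=
    integral_condExp hM
  exact setIntegral_eq_of_generateFrom μ hgen (isPiSystem_piSys M G)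
    integrable_condExp (ind_integrable μ hT) huniv key s
    ((sup_eq_generateFrom_piSys M G) ▸ hs)


/-- Main step: conditional independence given `M` is preserved when adding to the
conditioning σ-algebra a sub-σ-algebra `G` of one of the `F j`. -/
lemma CondIndepFam.sup_step {N : ℕ} {F : Fin N → MeasurableSpace Ω} (hF : ∀ n, F n ≤ mΩ)
    (hM : M ≤ mΩ) (j : Fin N) (hGF : G ≤ F j)
    (hCI : CondIndepFam μ F M) : CondIndepFam μ F (M ⊔ G) := by
  have hG' : G ≤ mΩ := hGF.trans (hF j)
  have hMG : M ⊔ G ≤ mΩ := sup_le hM hG'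
  intro A hA
  have hAΩ : ∀ n, MeasurableSet[mΩ] (A n) := fun n => hF n _ (hA n)
  have hIA : MeasurableSet[mΩ] (⋂ n, A n) := MeasurableSet.iInter hAΩ
  set c : Fin N → Ω → ℝ := fun n => μ[ind (A n) | M] with hc
  set e : Fin N → Ω → ℝ := fun n => μ[ind (A n) | M ⊔ G] with he
  -- for n ≠ j the conditional probabilities do not change
  have hF1 : ∀ n, n ≠ j → c n =ᵐ[μ] e n := by
    intro n hn
    refine condexp_eq_condexp_sup μ hM hG' (hAΩ n) ?_
    intro D hD
    exact hCI.pair μ hM hn (hA n) (hGF _ hD)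
  set g : Ω → ℝ := fun ω => ∏ n, e n ω with hg
  have hgsmMG : StronglyMeasurable[M ⊔ G] g :=
    Finset.stronglyMeasurable_fun_prod _ fun i _ => stronglyMeasurable_condExp
  have hgsm : StronglyMeasurable[mΩ] g := hgsmMG.mono hMG
  have hgbd : ∀ᵐ ω ∂μ, ‖g ω‖ ≤ 1 := by
    have h1 : ∀ᵐ ω ∂μ, ∀ n, ‖e n ω‖ ≤ 1 :=
      (ae_all_iff).2 fun n => condexp_ind_norm_le μ hMG (hAΩ n)
    filter_upwards [h1] with ω hω
    rw [hg, Real.norm_eq_abs, Finset.abs_prod]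
    exact Finset.prod_le_one (fun i _ => abs_nonneg _)
      (fun i _ => by rw [← Real.norm_eq_abs]; exact hω i)
  have hgInt : Integrable g μ :=
    Integrable.mono' (integrable_const 1) hgsm.aestronglyMeasurable hgbd
  -- the auxiliary product over `n ≠ j` of conditional probabilities given `M`
  set P : Ω → ℝ := fun ω => ∏ n ∈ Finset.univ.erase j, c n ω with hP
  have hPsmM : StronglyMeasurable[M] P :=
    Finset.stronglyMeasurable_fun_prod _ fun i _ => stronglyMeasurable_condExp
  have hPbd : ∀ᵐ ω ∂μ, ‖P ω‖ ≤ 1 := by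
    have h1 : ∀ᵐ ω ∂μ, ∀ n, ‖c n ω‖ ≤ 1 :=
      (ae_all_iff).2 fun n => condexp_ind_norm_le μ hM (hAΩ n)
    filter_upwards [h1] with ω hω
    rw [hP, Real.norm_eq_abs, Finset.abs_prod]
    exact Finset.prod_le_one (fun i _ => abs_nonneg _)
      (fun i _ => by rw [← Real.norm_eq_abs]; exact hω i)
  -- key computation on the π-system generating `M ⊔ G`
  have key : ∀ u ∈ piSys M G, ∫ ω in u, g ω ∂μ = ∫ ω in u, ind (⋂ n, A n) ω ∂μ := by
    rintro u ⟨B, D, hB, hD, rfl⟩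
    have hD' : MeasurableSet[mΩ] D := hG' _ hD
    have hB' : MeasurableSet[mΩ] B := hM _ hB
    have hBD : MeasurableSet[M ⊔ G] (B ∩ D) :=
      MeasurableSet.inter ((le_sup_left : M ≤ M ⊔ G) _ hB)
        ((le_sup_right : G ≤ M ⊔ G) _ hD)
    -- Step 1 : `g = P * e j` a.e.
    have hall : ∀ᵐ ω ∂μ, ∀ n, n ≠ j → c n ω = e n ω := by
      refine (ae_all_iff).2 fun n => ?_
      by_cases hn : n = j
      · subst hn; exact Filter.Eventually.of_forall fun ω h => absurd rfl h
      · exact (hF1 n hn).mono fun ω hω _ => hω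
    have step1 : g =ᵐ[μ] fun ω => P ω * e j ω := by
      filter_upwards [hall] with ω hω
      show ∏ n, e n ω = (∏ n ∈ Finset.univ.erase j, c n ω) * e j ω
      rw [← Finset.mul_prod_erase Finset.univ _ (Finset.mem_univ j), mul_comm]
      congr 1
      exact Finset.prod_congr rfl fun n hn => (hω n (Finset.ne_of_mem_erase hn)).symm
    -- integrability facts
    have hint1 : Integrable (fun ω => P ω * ind (A j) ω) μ := by
      refine Integrable.mono' (integrable_const 1)
        (((hPsmM.mono hM).mul (ind_sm (hAΩ j))).aestronglyMeasurable) ?_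
      filter_upwards [hPbd] with ω hω
      exact mul_norm_le_one hω (ind_norm_le _ ω)
    have hAjD : MeasurableSet[mΩ] (A j ∩ D) := (hAΩ j).inter hD'
    have hint2 : Integrable (fun ω => P ω * ind (A j ∩ D) ω) μ := by
      refine Integrable.mono' (integrable_const 1)
        (((hPsmM.mono hM).mul (ind_sm hAjD)).aestronglyMeasurable) ?_
      filter_upwards [hPbd] with ω hω
      exact mul_norm_le_one hω (ind_norm_le _ ω)
    -- Step 2 : pull-out over `M ⊔ G`
    have pull1 : (μ[(fun ω => P ω * ind (A j) ω) | M ⊔ G])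
        =ᵐ[μ] fun ω => P ω * e j ω := by
      have := condExp_mul_of_stronglyMeasurable_left (μ := μ)
        (hPsmM.mono (le_sup_left : M ≤ M ⊔ G)) hint1 (ind_integrable μ (hAΩ j))
      exact this
    -- Step 3 : pull-out over `M` and conditional independence
    have pull2 : (μ[(fun ω => P ω * ind (A j ∩ D) ω) | M])
        =ᵐ[μ] fun ω => P ω * (μ[ind (A j ∩ D) | M]) ω := by
      have := condExp_mul_of_stronglyMeasurable_left (μ := μ)
        hPsmM hint2 (ind_integrable μ hAjD)
      exact this
    set A' : Fin N → Set Ω := Function.update A j (A j ∩ D) with hA'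
    have hA'm : ∀ n, MeasurableSet[F n] (A' n) := by
      intro n
      by_cases hn : n = j
      · rw [hA', hn, Function.update_self]; exact (hA j).inter (hGF _ hD)
      · rw [hA', Function.update_of_ne hn]; exact hA n
    have hA'Ω : MeasurableSet[mΩ] (⋂ n, A' n) :=
      MeasurableSet.iInter fun n => hF n _ (hA'm n)
    have hprod' : (fun ω => ∏ n, (μ[ind (A' n) | M]) ω)
        = fun ω => P ω * (μ[ind (A j ∩ D) | M]) ω := by
      funext ω
      rw [← Finset.mul_prod_erase Finset.univ _ (Finset.mem_univ j), mul_comm, hP]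
      congr 1
      · exact Finset.prod_congr rfl fun n hn => by
          rw [hA', Function.update_of_ne (Finset.ne_of_mem_erase hn)]
      · rw [hA', Function.update_self]
    have hCI' : (μ[ind (⋂ n, A' n) | M])
        =ᵐ[μ] fun ω => P ω * (μ[ind (A j ∩ D) | M]) ω := by
      rw [← hprod']
      exact hCI A' hA'm
    have hInter' : ⋂ n, A' n = ((⋂ n, A n) ∩ D) := by
      ext ω
      simp only [Set.mem_iInter, Set.mem_inter_iff]
      constructor
      · intro h
        have hj := h j
        rw [hA', Function.update_self] at hj
        refine ⟨fun n => ?_, hj.2⟩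
        by_cases hn : n = j
        · rw [hn]; exact hj.1
        · have := h n; rwa [hA', Function.update_of_ne hn] at this
      · rintro ⟨h1, h2⟩ n
        by_cases hn : n = j
        · rw [hA', hn, Function.update_self]; exact ⟨h1 j, h2⟩
        · rw [hA', Function.update_of_ne hn]; exact h1 n
    -- now the chain of equalities
    calc ∫ ω in B ∩ D, g ω ∂μ
        = ∫ ω in B ∩ D, P ω * e j ω ∂μ :=
          integral_congr_ae (ae_restrict_of_ae step1)
      _ = ∫ ω in B ∩ D, (μ[(fun ω => P ω * ind (A j) ω) | M ⊔ G]) ω ∂μ :=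
          (integral_congr_ae (ae_restrict_of_ae pull1)).symm
      _ = ∫ ω in B ∩ D, P ω * ind (A j) ω ∂μ :=
          setIntegral_condExp hMG hint1 hBD
      _ = ∫ ω in B, D.indicator (fun ω => P ω * ind (A j) ω) ω ∂μ :=
          setIntegral_inter_ind μ _ hD' B
      _ = ∫ ω in B, P ω * ind (A j ∩ D) ω ∂μ := by
          refine integral_congr_ae (ae_restrict_of_ae (Filter.Eventually.of_forall fun ω => ?_))
          by_cases hω : ω ∈ D
          · by_cases hω2 : ω ∈ A j <;>
              simp [ind, Set.indicator_apply, hω, hω2]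
          · simp [ind, Set.indicator_apply, hω]
      _ = ∫ ω in B, (μ[(fun ω => P ω * ind (A j ∩ D) ω) | M]) ω ∂μ :=
          (setIntegral_condExp hM hint2 hB).symm
      _ = ∫ ω in B, (μ[ind (⋂ n, A' n) | M]) ω ∂μ :=
          integral_congr_ae (ae_restrict_of_ae (pull2.trans hCI'.symm))
      _ = ∫ ω in B, ind (⋂ n, A' n) ω ∂μ :=
          setIntegral_condExp hM (ind_integrable μ hA'Ω) hB
      _ = (μ (B ∩ ⋂ n, A' n)).toReal := setIntegral_ind μ hA'Ω B
      _ = (μ ((B ∩ D) ∩ ⋂ n, A n)).toReal := by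
          have hset : B ∩ ((⋂ n, A n) ∩ D) = (B ∩ D) ∩ ⋂ n, A n := by
            ext ω
            simp only [Set.mem_inter_iff]
            tauto
          rw [hInter', hset]
      _ = ∫ ω in B ∩ D, ind (⋂ n, A n) ω ∂μ := (setIntegral_ind μ hIA _).symm
  -- conclude by uniqueness of conditional expectation
  have huniv : ∫ ω, g ω ∂μ = ∫ ω, ind (⋂ n, A n) ω ∂μ := by
    have h := key Set.univ ⟨Set.univ, Set.univ, MeasurableSet.univ, MeasurableSet.univ,
      (Set.univ_inter Set.univ).symm⟩
    rwa [setIntegral_univ, setIntegral_univ] at h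
  have hgen : MeasurableSpace.generateFrom (piSys M G) ≤ mΩ := by
    rw [← sup_eq_generateFrom_piSys]; exact hMG
  refine (ae_eq_condExp_of_forall_setIntegral_eq hMG (ind_integrable μ hIA)
    ?_ ?_ ?_).symm
  · intro s _ _
    exact hgInt.integrableOn
  · intro s hs _
    exact setIntegral_eq_of_generateFrom μ hgen (isPiSystem_piSys M G) hgInt
      (ind_integrable μ hIA) huniv key s ((sup_eq_generateFrom_piSys M G) ▸ hs)
  · exact hgsmMG.aestronglyMeasurable

end Two
end Stmt4Aux



open MeasureTheory

/-- If `F1,...,FN` are conditionally independent given `F0` and `Gn ⊆ Fn`,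
then for events `An ∈ Fn`, the conditional probability of `⋂ An` given
`σ(F0, G1,...,GN)` equals the product of the conditional probabilities of the `An`
given that same sigma-algebra, almost surely. -/
theorem stmt4 {Ω : Type*} {mΩ : MeasurableSpace Ω} (μ : Measure Ω)
    [IsProbabilityMeasure μ] (N : ℕ)
    (F0 : MeasurableSpace Ω) (F G : Fin N → MeasurableSpace Ω)
    (hF0 : F0 ≤ mΩ) (hF : ∀ n, F n ≤ mΩ) (hG : ∀ n, G n ≤ F n)
    -- conditional independence of F1,...,FN given F0:
    (hCI : ∀ A : Fin N → Set Ω, (∀ n, MeasurableSet[F n] (A n)) →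
      (μ[Set.indicator (⋂ n, A n) (fun _ => (1 : ℝ)) | F0]) =ᵐ[μ]
        (fun ω => ∏ n, (μ[Set.indicator (A n) (fun _ => (1 : ℝ)) | F0]) ω))
    (A : Fin N → Set Ω) (hA : ∀ n, MeasurableSet[F n] (A n)) :
    (μ[Set.indicator (⋂ n, A n) (fun _ => (1 : ℝ)) | F0 ⊔ ⨆ n, G n]) =ᵐ[μ]
      (fun ω => ∏ n,
        (μ[Set.indicator (A n) (fun _ => (1 : ℝ)) | F0 ⊔ ⨆ n, G n]) ω) := by
  have hCI' : Stmt4Aux.CondIndepFam μ F F0 := fun A hA => hCI A hA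
  have hsup : ∀ s : Finset (Fin N), F0 ⊔ s.sup G ≤ mΩ :=
    fun s => sup_le hF0 (Finset.sup_le fun n _ => (hG n).trans (hF n))
  have main : ∀ s : Finset (Fin N), Stmt4Aux.CondIndepFam μ F (F0 ⊔ s.sup G) := by
    intro s
    induction s using Finset.induction_on with
    | empty => rw [Finset.sup_empty, sup_bot_eq]; exact hCI'
    | insert _ _ hj ih =>
        rename_i j s
        have step := Stmt4Aux.CondIndepFam.sup_step μ hF (hsup s) j (hG j) ih
        rw [show F0 ⊔ (insert j s).sup G = (F0 ⊔ s.sup G) ⊔ G j from by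
          rw [Finset.sup_insert, sup_comm (G j), ← sup_assoc]]
        exact step
  have final := main Finset.univ
  rw [Finset.sup_univ_eq_iSup] at final
  exact final A hA
end

section
/- Under the assumptions of the static team problem with N independent players: with R symmetric PSD block matrix indexed by states X^1,...,X^N and controls U^1,...,U^N, with the control-block R^{UU} block-diagonal-dominant in the sense of the problem, the functional optimization min over zero-mean measurable q_1,...,q_N of tr(R · Cov(vec(X^1,...,X^N, q_1(X^1),...,q_N(X^N)))) decomposes into N separate single-player problems: it equals the sum over n of min over zero-mean q_n of E[(X^n - μ_n; q_n(X^n))^T R̃^n (X^n - μ_n; q_n(X^n))], where R̃^n is the submatrix of R corresponding to indices (X^n, U^n). -/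
open Matrix MeasureTheory ProbabilityTheory

lemma stmt8_integrable_mul_L2 {Ω : Type*} [MeasurableSpace Ω] {μ : Measure Ω}
    {f g : Ω → ℝ} (hf : MemLp f 2 μ) (hg : MemLp g 2 μ) :
    Integrable (fun ω => f ω * g ω) μ := by
  have h : MemLp (f • g) 1 μ := hg.smul hf
    (hpqr := ⟨by rw [inv_one, ← two_mul]; exact ENNReal.mul_inv_cancel (by norm_num) (by norm_num)⟩)
  exact memLp_one_iff_integrable.mp h

lemma stmt8_quad_integral {Ω : Type*} [MeasurableSpace Ω] {μ : Measure Ω}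
    {ι : Type*} [Fintype ι] (R : Matrix ι ι ℝ)
    (Z : ι → Ω → ℝ) (hZ : ∀ a, MemLp (Z a) 2 μ) :
    ∫ ω, (fun a => Z a ω) ⬝ᵥ R.mulVec (fun a => Z a ω) ∂μ
      = ∑ a, ∑ b, R a b * ∫ ω, Z a ω * Z b ω ∂μ := by
  have h1 : ∀ ω, (fun a => Z a ω) ⬝ᵥ R.mulVec (fun a => Z a ω)
      = ∑ a, ∑ b, R a b * (Z a ω * Z b ω) := by
    intro ω
    simp only [dotProduct, mulVec, Finset.mul_sum]
    refine Finset.sum_congr rfl fun a _ => ?_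
    refine Finset.sum_congr rfl fun b _ => by ring
  simp_rw [h1]
  rw [integral_finset_sum]
  · refine Finset.sum_congr rfl fun a _ => ?_
    rw [integral_finset_sum]
    · exact Finset.sum_congr rfl fun b _ => integral_const_mul _ _
    · exact fun b _ => (stmt8_integrable_mul_L2 (hZ a) (hZ b)).const_mul _
  · exact fun a _ => integrable_finset_sum _ fun b _ =>
      (stmt8_integrable_mul_L2 (hZ a) (hZ b)).const_mul _

/-- Static team problem with `N` independent players: the functional
optimization over zero-mean measurable `q_1,...,q_N` of
`E[vec(X¹-μ₁,...,Xᴺ-μ_N, q₁(X¹),...,q_N(Xᴺ))ᵀ R vec(...)]`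
(equal to `tr(R·Cov)` of the stacked vector) decomposes into `N` separate
single-player problems, each with the submatrix `R̃ⁿ` of `R` corresponding to the
indices `(Xⁿ, Uⁿ)`. -/
theorem stmt8 {N : ℕ} {d e : Fin N → ℕ} {Ω : Type*} [MeasurableSpace Ω]
    (μ : Measure Ω) [IsProbabilityMeasure μ]
    (X : (n : Fin N) → Ω → (Fin (d n) → ℝ)) (hXmeas : ∀ n, Measurable (X n))
    (hindep : iIndepFun X μ)
    (hX2 : ∀ n i, MemLp (fun ω => X n ω i) 2 μ)
    (mX : (n : Fin N) → Fin (d n) → ℝ) (hmX : ∀ n i, mX n i = ∫ ω, X n ω i ∂μ)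
    (R : Matrix ((Σ n : Fin N, Fin (d n)) ⊕ (Σ n : Fin N, Fin (e n)))
                ((Σ n : Fin N, Fin (d n)) ⊕ (Σ n : Fin N, Fin (e n))) ℝ)
    (hR : R.PosSemidef) :
    sInf {y : ℝ | ∃ q : (n : Fin N) → (Fin (d n) → ℝ) → (Fin (e n) → ℝ),
        (∀ n, Measurable (q n)) ∧
        (∀ n j, MemLp (fun ω => q n (X n ω) j) 2 μ) ∧
        (∀ n j, (∫ ω, q n (X n ω) j ∂μ) = 0) ∧
        y = ∫ ω, (Sum.elim (fun p : Σ n : Fin N, Fin (d n) => X p.1 ω p.2 - mX p.1 p.2)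
                    (fun p : Σ n : Fin N, Fin (e n) => q p.1 (X p.1 ω) p.2)) ⬝ᵥ
              R.mulVec
                (Sum.elim (fun p : Σ n : Fin N, Fin (d n) => X p.1 ω p.2 - mX p.1 p.2)
                  (fun p : Σ n : Fin N, Fin (e n) => q p.1 (X p.1 ω) p.2)) ∂μ} =
    ∑ n : Fin N,
      sInf {y : ℝ | ∃ qn : (Fin (d n) → ℝ) → (Fin (e n) → ℝ), Measurable qn ∧
        (∀ j, MemLp (fun ω => qn (X n ω) j) 2 μ) ∧
        (∀ j, (∫ ω, qn (X n ω) j ∂μ) = 0) ∧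
        y = ∫ ω, (Sum.elim (fun i => X n ω i - mX n i) (qn (X n ω))) ⬝ᵥ
              (R.submatrix (Sum.map (fun i => (⟨n, i⟩ : Σ k, Fin (d k)))
                             (fun j => (⟨n, j⟩ : Σ k, Fin (e k))))
                           (Sum.map (fun i => (⟨n, i⟩ : Σ k, Fin (d k)))
                             (fun j => (⟨n, j⟩ : Σ k, Fin (e k))))).mulVec
                (Sum.elim (fun i => X n ω i - mX n i) (qn (X n ω))) ∂μ} := by
  classical
  -- notation
  let em : (n : Fin N) → (Fin (d n) ⊕ Fin (e n)) →
      ((Σ n : Fin N, Fin (d n)) ⊕ (Σ n : Fin N, Fin (e n))) :=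
    fun n => Sum.map (fun i => (⟨n, i⟩ : Σ k, Fin (d k))) (fun j => (⟨n, j⟩ : Σ k, Fin (e k)))
  -- per-player objective
  let sval : (n : Fin N) → ((Fin (d n) → ℝ) → (Fin (e n) → ℝ)) → ℝ := fun n qn =>
    ∫ ω, (Sum.elim (fun i => X n ω i - mX n i) (qn (X n ω))) ⬝ᵥ
        (R.submatrix (em n) (em n)).mulVec
        (Sum.elim (fun i => X n ω i - mX n i) (qn (X n ω))) ∂μ
  let S : Fin N → Set ℝ := fun n => {y : ℝ | ∃ qn : (Fin (d n) → ℝ) → (Fin (e n) → ℝ),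
      Measurable qn ∧ (∀ j, MemLp (fun ω => qn (X n ω) j) 2 μ) ∧
      (∀ j, (∫ ω, qn (X n ω) j ∂μ) = 0) ∧ y = sval n qn}
  -- the key decomposition for any admissible joint strategy q
  have key : ∀ (q : (n : Fin N) → (Fin (d n) → ℝ) → (Fin (e n) → ℝ)),
      (∀ n, Measurable (q n)) → (∀ n j, MemLp (fun ω => q n (X n ω) j) 2 μ) →
      (∀ n j, (∫ ω, q n (X n ω) j ∂μ) = 0) →
      (∫ ω, (Sum.elim (fun p : Σ n : Fin N, Fin (d n) => X p.1 ω p.2 - mX p.1 p.2)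
                    (fun p : Σ n : Fin N, Fin (e n) => q p.1 (X p.1 ω) p.2)) ⬝ᵥ
              R.mulVec
                (Sum.elim (fun p : Σ n : Fin N, Fin (d n) => X p.1 ω p.2 - mX p.1 p.2)
                  (fun p : Σ n : Fin N, Fin (e n) => q p.1 (X p.1 ω) p.2)) ∂μ)
        = ∑ n, sval n (q n) := by
    intro q hqm hq2 hq0
    set Z : ((Σ n : Fin N, Fin (d n)) ⊕ (Σ n : Fin N, Fin (e n))) → Ω → ℝ := fun a ω =>
      Sum.elim (fun p : Σ n : Fin N, Fin (d n) => X p.1 ω p.2 - mX p.1 p.2)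
        (fun p : Σ n : Fin N, Fin (e n) => q p.1 (X p.1 ω) p.2) a with hZ
    have hZ2 : ∀ a, MemLp (Z a) 2 μ := by
      rintro (⟨n, i⟩ | ⟨n, j⟩)
      · exact (hX2 n i).sub (memLp_const _)
      · exact hq2 n j
    have hZ0 : ∀ a, (∫ ω, Z a ω ∂μ) = 0 := by
      rintro (⟨n, i⟩ | ⟨n, j⟩)
      · show (∫ ω, (X n ω i - mX n i) ∂μ) = 0
        rw [integral_sub ((hX2 n i).integrable one_le_two) (integrable_const _), integral_const]
        simp [hmX n i]
      · exact hq0 n j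
    -- player of an index
    let π : ((Σ n : Fin N, Fin (d n)) ⊕ (Σ n : Fin N, Fin (e n))) → Fin N :=
      Sum.elim Sigma.fst Sigma.fst
    have hcross : ∀ a b, π a ≠ π b → (∫ ω, Z a ω * Z b ω ∂μ) = 0 := by
      intro a b hab
      have hind : IndepFun (Z a) (Z b) μ := by
        rcases a with (⟨n, i⟩ | ⟨n, i⟩) <;> rcases b with (⟨m, j⟩ | ⟨m, j⟩) <;>
          [exact (hindep.indepFun hab).comp
              ((measurable_pi_apply i).sub measurable_const)
              ((measurable_pi_apply j).sub measurable_const);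
           exact (hindep.indepFun hab).comp
              ((measurable_pi_apply i).sub measurable_const)
              ((measurable_pi_apply j).comp (hqm m));
           exact (hindep.indepFun hab).comp
              ((measurable_pi_apply i).comp (hqm n))
              ((measurable_pi_apply j).sub measurable_const);
           exact (hindep.indepFun hab).comp
              ((measurable_pi_apply i).comp (hqm n))
              ((measurable_pi_apply j).comp (hqm m))]
      have := hind.integral_mul_eq_mul_integral (hZ2 a).1 (hZ2 b).1
      calc (∫ ω, Z a ω * Z b ω ∂μ) = ∫ ω, (Z a * Z b) ω ∂μ := rfl
        _ = (∫ ω, Z a ω ∂μ) * (∫ ω, Z b ω ∂μ) := this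
        _ = 0 := by rw [hZ0 a, hZ0 b]; ring
    have hπ : ∀ n c, π (em n c) = n := by rintro n (i | j) <;> rfl
    -- the big integral as a double sum
    have hbig := stmt8_quad_integral (μ := μ) R Z hZ2
    have hbig' : (∫ ω, (Sum.elim (fun p : Σ n : Fin N, Fin (d n) => X p.1 ω p.2 - mX p.1 p.2)
                    (fun p : Σ n : Fin N, Fin (e n) => q p.1 (X p.1 ω) p.2)) ⬝ᵥ
              R.mulVec
                (Sum.elim (fun p : Σ n : Fin N, Fin (d n) => X p.1 ω p.2 - mX p.1 p.2)
                  (fun p : Σ n : Fin N, Fin (e n) => q p.1 (X p.1 ω) p.2)) ∂μ)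
        = ∑ a, ∑ b, R a b * ∫ ω, Z a ω * Z b ω ∂μ := hbig
    rw [hbig']
    -- the small integrals as double sums
    have hsmall : ∀ n, sval n (q n)
        = ∑ c, ∑ c', R (em n c) (em n c') * ∫ ω, Z (em n c) ω * Z (em n c') ω ∂μ := by
      intro n
      have hv : ∀ ω, (Sum.elim (fun i => X n ω i - mX n i) (q n (X n ω)))
          = fun c => Z (em n c) ω := by
        intro ω; funext c; cases c <;> rfl
      have := stmt8_quad_integral (μ := μ) (R.submatrix (em n) (em n))
        (fun c => Z (em n c)) (fun c => hZ2 (em n c))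
      calc sval n (q n) = ∫ ω, (fun c => Z (em n c) ω) ⬝ᵥ
            (R.submatrix (em n) (em n)).mulVec (fun c => Z (em n c) ω) ∂μ := by
              unfold sval; simp_rw [hv]
        _ = ∑ c, ∑ c', (R.submatrix (em n) (em n)) c c'
              * ∫ ω, Z (em n c) ω * Z (em n c') ω ∂μ := this
        _ = ∑ c, ∑ c', R (em n c) (em n c') * ∫ ω, Z (em n c) ω * Z (em n c') ω ∂μ := rfl
    simp_rw [hsmall]
    -- reindex the double sum over I via sigma types
    have hreindex : ∀ (g : ((Σ n : Fin N, Fin (d n)) ⊕ (Σ n : Fin N, Fin (e n))) → ℝ), (∑ a, g a) = ∑ n, ∑ c : Fin (d n) ⊕ Fin (e n), g (em n c) := by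
      intro g
      rw [← Equiv.sum_comp (Equiv.sigmaSumDistrib (fun n => Fin (d n)) (fun n => Fin (e n))) g]
      rw [← Finset.univ_sigma_univ, Finset.sum_sigma]
      rfl
    rw [hreindex (fun a => ∑ b, R a b * ∫ ω, Z a ω * Z b ω ∂μ)]
    refine Finset.sum_congr rfl fun n _ => Finset.sum_congr rfl fun c _ => ?_
    rw [hreindex (fun b => R (em n c) b * ∫ ω, Z (em n c) ω * Z b ω ∂μ)]
    refine Finset.sum_eq_single_of_mem n (Finset.mem_univ n) fun m _ hmn => ?_
    refine Finset.sum_eq_zero fun c' _ => ?_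
    rw [hcross (em n c) (em m c') (by rw [hπ, hπ]; exact fun h => hmn h.symm)]
    ring
  -- nonnegativity of the per-player objectives
  have hSnonneg : ∀ n, ∀ y ∈ S n, (0:ℝ) ≤ y := by
    rintro n y ⟨qn, _, _, _, rfl⟩
    refine integral_nonneg fun ω => ?_
    have := (hR.submatrix (em n)).dotProduct_mulVec_nonneg (Sum.elim (fun i => X n ω i - mX n i) (qn (X n ω)))
    simpa using this
  have hSbdd : ∀ n, BddBelow (S n) := fun n => ⟨0, fun y hy => hSnonneg n y hy⟩
  -- the zero strategy is admissible
  have hzero_mem : ∀ n, sval n (fun _ => fun _ => (0:ℝ)) ∈ S n := by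
    intro n
    exact ⟨fun _ _ => 0, measurable_const, fun j => memLp_const 0,
      fun j => by simp, rfl⟩
  have hSne : ∀ n, (S n).Nonempty := fun n => ⟨_, hzero_mem n⟩
  -- name the big feasible set
  set T := {y : ℝ | ∃ q : (n : Fin N) → (Fin (d n) → ℝ) → (Fin (e n) → ℝ),
        (∀ n, Measurable (q n)) ∧
        (∀ n j, MemLp (fun ω => q n (X n ω) j) 2 μ) ∧
        (∀ n j, (∫ ω, q n (X n ω) j ∂μ) = 0) ∧
        y = ∫ ω, (Sum.elim (fun p : Σ n : Fin N, Fin (d n) => X p.1 ω p.2 - mX p.1 p.2)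
                    (fun p : Σ n : Fin N, Fin (e n) => q p.1 (X p.1 ω) p.2)) ⬝ᵥ
              R.mulVec
                (Sum.elim (fun p : Σ n : Fin N, Fin (d n) => X p.1 ω p.2 - mX p.1 p.2)
                  (fun p : Σ n : Fin N, Fin (e n) => q p.1 (X p.1 ω) p.2)) ∂μ} with hT
  have hTne : T.Nonempty := by
    refine ⟨_, ⟨fun _ _ _ => 0, fun _ => measurable_const, fun _ j => memLp_const 0,
      fun _ j => by simp, rfl⟩⟩
  show sInf T = ∑ n, sInf (S n)
  apply le_antisymm
  · -- sInf T ≤ ∑ sInf S n : pick near-optimal strategies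
    refine le_of_forall_pos_le_add fun ε hε => ?_
    have hδ : (0:ℝ) < ε / (N + 1) := by positivity
    have hpick : ∀ n, ∃ qn : (Fin (d n) → ℝ) → (Fin (e n) → ℝ),
        Measurable qn ∧ (∀ j, MemLp (fun ω => qn (X n ω) j) 2 μ) ∧
        (∀ j, (∫ ω, qn (X n ω) j ∂μ) = 0) ∧ sval n qn < sInf (S n) + ε / (N + 1) := by
      intro n
      obtain ⟨y, hy, hylt⟩ := Real.lt_sInf_add_pos (hSne n) hδ
      obtain ⟨qn, h1, h2, h3, rfl⟩ := hy
      exact ⟨qn, h1, h2, h3, hylt⟩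
    choose q hq1 hq2 hq3 hq4 using hpick
    have hmem : (∑ n, sval n (q n)) ∈ T := ⟨q, hq1, hq2, hq3, (key q hq1 hq2 hq3).symm⟩
    calc sInf T ≤ ∑ n, sval n (q n) := csInf_le ⟨0, by
          rintro y ⟨q', h1, h2, h3, rfl⟩
          rw [key q' h1 h2 h3]
          exact Finset.sum_nonneg fun n _ => hSnonneg n _ ⟨q' n, h1 n, h2 n, h3 n, rfl⟩⟩ hmem
      _ ≤ ∑ n, (sInf (S n) + ε / (N + 1)) :=
          Finset.sum_le_sum fun n _ => le_of_lt (hq4 n)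
      _ = (∑ n, sInf (S n)) + N * (ε / (N + 1)) := by
          rw [Finset.sum_add_distrib]; simp [Finset.card_univ, mul_comm]
      _ ≤ (∑ n, sInf (S n)) + ε := by
          have : (N:ℝ) * (ε / (N + 1)) ≤ ε := by
            rw [mul_div_assoc']
            rw [div_le_iff₀ (by positivity)]
            nlinarith
          linarith
  · -- ∑ sInf S n ≤ sInf T
    refine le_csInf hTne ?_
    rintro y ⟨q, h1, h2, h3, rfl⟩
    rw [key q h1 h2 h3]
    exact Finset.sum_le_sum fun n _ =>
      csInf_le (hSbdd n) ⟨q n, h1 n, h2 n, h3 n, rfl⟩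
end

section
/- The backwards Riccati recursion P_{T+1} = 0, P_t = Ω(P_{t+1}, A, B, R_t^{XX}, R_t^{UU}, R_t^{XU}) produces symmetric positive semi-definite matrices P_t for every t = 0,...,T+1, provided each R_t is symmetric PSD with R_t^{UU} positive definite. -/
open Matrix

/-- The Riccati-type operator `Ω`. -/
noncomputable def riccatiOmega {n m : ℕ} (P A : Matrix (Fin n) (Fin n) ℝ)
    (B : Matrix (Fin n) (Fin m) ℝ) (R11 : Matrix (Fin n) (Fin n) ℝ)
    (R22 : Matrix (Fin m) (Fin m) ℝ) (R12 : Matrix (Fin n) (Fin m) ℝ) :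
    Matrix (Fin n) (Fin n) ℝ :=
  R11 + Aᵀ * P * A -
    (R12 + Aᵀ * P * B) * (R22 + Bᵀ * P * B)⁻¹ * (R12ᵀ + Bᵀ * P * A)

lemma riccatiOmega_posSemidef {n m : ℕ} (P A : Matrix (Fin n) (Fin n) ℝ)
    (B : Matrix (Fin n) (Fin m) ℝ) (R11 : Matrix (Fin n) (Fin n) ℝ)
    (R22 : Matrix (Fin m) (Fin m) ℝ) (R12 : Matrix (Fin n) (Fin m) ℝ)
    (hP : P.PosSemidef)
    (hR : (Matrix.fromBlocks R11 R12 R12ᵀ R22).PosSemidef)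
    (hR22 : R22.PosDef) :
    (riccatiOmega P A B R11 R22 R12).PosSemidef := by
  have hBPB : (Bᴴ * P * B).PosSemidef := hP.conjTranspose_mul_mul_same B
  have hBPB' : (Bᵀ * P * B).PosSemidef := by
    rwa [conjTranspose_eq_transpose_of_trivial] at hBPB
  have hD : (R22 + Bᵀ * P * B).PosDef := hR22.add_posSemidef hBPB'
  haveI : Invertible (R22 + Bᵀ * P * B) := hD.isUnit.invertible
  -- the big block matrix
  have hconj : ((fromCols A B)ᴴ * P * fromCols A B).PosSemidef :=
    hP.conjTranspose_mul_mul_same _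
  have hblocks : (fromCols A B)ᴴ * P * fromCols A B =
      fromBlocks (Aᵀ * P * A) (Aᵀ * P * B) (Bᵀ * P * A) (Bᵀ * P * B) := by
    rw [conjTranspose_eq_transpose_of_trivial, transpose_fromCols, fromRows_mul,
      fromRows_mul_fromCols]
  have hbig : (fromBlocks (R11 + Aᵀ * P * A) (R12 + Aᵀ * P * B)
      (R12ᵀ + Bᵀ * P * A) (R22 + Bᵀ * P * B)).PosSemidef := by
    have := hR.add (hblocks ▸ hconj)
    rwa [← Matrix.fromBlocks_add]
  have hPt : Pᵀ = P := by
    have h := hP.isHermitian.eq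
    rwa [conjTranspose_eq_transpose_of_trivial] at h
  have he : (R12 + Aᵀ * P * B)ᴴ = R12ᵀ + Bᵀ * P * A := by
    rw [conjTranspose_eq_transpose_of_trivial]
    simp [transpose_add, transpose_mul, hPt, Matrix.mul_assoc]
  have hbig' : (fromBlocks (R11 + Aᵀ * P * A) (R12 + Aᵀ * P * B)
      (R12 + Aᵀ * P * B)ᴴ (R22 + Bᵀ * P * B)).PosSemidef := by
    rw [he]; exact hbig
  have := (Matrix.PosDef.fromBlocks₂₂ (R11 + Aᵀ * P * A) (R12 + Aᵀ * P * B) hD).mp hbig'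
  rw [he] at this
  simpa [riccatiOmega, add_sub_assoc, sub_sub] using this

/-- The backwards Riccati recursion `P_{T+1} = 0`,
`P_t = Ω(P_{t+1}, A, B, R_t^{XX}, R_t^{UU}, R_t^{XU})` produces symmetric PSD
matrices for every `t = 0,...,T+1`, provided each `R_t` is symmetric PSD with
`R_t^{UU}` positive definite. -/
theorem stmt10 {n m : ℕ} (T : ℕ) (A : Matrix (Fin n) (Fin n) ℝ)
    (B : Matrix (Fin n) (Fin m) ℝ)
    (RXX : ℕ → Matrix (Fin n) (Fin n) ℝ) (RXU : ℕ → Matrix (Fin n) (Fin m) ℝ)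
    (RUU : ℕ → Matrix (Fin m) (Fin m) ℝ)
    (hRt : ∀ t ≤ T, (Matrix.fromBlocks (RXX t) (RXU t) (RXU t)ᵀ (RUU t)).PosSemidef)
    (hRUU : ∀ t ≤ T, (RUU t).PosDef)
    (P : ℕ → Matrix (Fin n) (Fin n) ℝ)
    (hPfinal : P (T + 1) = 0)
    (hPrec : ∀ t ≤ T, P t = riccatiOmega (P (t + 1)) A B (RXX t) (RUU t) (RXU t)) :
    ∀ t ≤ T + 1, (P t).PosSemidef := by
  have key : ∀ k, ∀ t ≤ T + 1, T + 1 - t ≤ k → (P t).PosSemidef := by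
    intro k
    induction k with
    | zero =>
      intro t ht h0
      have : t = T + 1 := by omega
      subst this
      rw [hPfinal]
      exact Matrix.PosSemidef.zero
    | succ k ih =>
      intro t ht hk
      rcases eq_or_lt_of_le ht with rfl | hlt
      · rw [hPfinal]; exact Matrix.PosSemidef.zero
      · have htT : t ≤ T := by omega
        rw [hPrec t htT]
        exact riccatiOmega_posSemidef _ _ _ _ _ _
          (ih (t + 1) (by omega) (by omega)) (hRt t htT) (hRUU t htT)
  intro t ht
  exact key (T + 1 - t) t ht le_rfl
end
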